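/- Assume the UB setup with r ≥ 3. For g ∈ R_n, let supp(g) ⊆ {0,…,n−1} denote the set of indices of nonzero coefficients of g, and define ρ_6(g) := max over all 0 ≤ i_1 < i_2 < i_3 ≤ r−1 of |N_{12}|·|N_{13}|·|N_{23}|, where for {a,b,c} = {1,2,3}, N_{ab} := (supp(x^{i_a}·g) ∩ supp(x^{i_b}·g)) \ supp(x^{i_c}·g) (this equals the paper's maximum induced 6-cycle density of the Tanner graph of the first r rows of Circ(g)). Then, as real numbers, d ≤ min{3·wt(f) + 3 − 6·ρ_6(f)^{1/3}, 3·wt(h) − 6·ρ_6(h)^{1/3}}. -/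

import Mathlib

open Polynomial

noncomputable section

/-- `R_n = F_2[x]/(x^n - 1)`. -/
abbrev Rq (n : ℕ) : Type :=
  Polynomial (ZMod 2) ⧸ Ideal.span ({X ^ n - 1} : Set (Polynomial (ZMod 2)))

/-- The canonical projection `F_2[x] → R_n`. -/
abbrev mkq (n : ℕ) : Polynomial (ZMod 2) →+* Rq n :=
  Ideal.Quotient.mk (Ideal.span ({X ^ n - 1} : Set (Polynomial (ZMod 2))))

/-- The unique polynomial representative of degree `< n` of an element of `R_n`
(obtained by reducing any lift modulo the monic polynomial `x^n - 1`). -/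
def rep (n : ℕ) (z : Rq n) : Polynomial (ZMod 2) :=
  Function.surjInv Ideal.Quotient.mk_surjective z %ₘ (X ^ n - 1)

/-- Hamming weight of an element of `R_n`: the number of nonzero coefficients of its
unique representative of degree `< n`. -/
def wtq (n : ℕ) (z : Rq n) : ℕ := (rep n z).support.card

/-- The `Z`-distance of `UB(a, ℓ)` (with `t = 2^ℓ`):
`d_Z = min { wt(u) + wt(v) : (u,v) ∈ ker H_Z \ rs H_X }`, where
`ker H_Z = {(u,v) : b*·u + a*·v = 0}` and `rs H_X = {(a·s, b·s)}`, `b = a^t`. -/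
def dZv (n : ℕ) (a : Polynomial (ZMod 2)) (t : ℕ) : ℕ :=
  sInf {m : ℕ | ∃ w : Rq n × Rq n,
    (mkq n ((a ^ t).reverse) * w.1 + mkq n a.reverse * w.2 = 0) ∧
    (¬ ∃ s : Rq n, w = (mkq n a * s, (mkq n a) ^ t * s)) ∧
    m = wtq n w.1 + wtq n w.2}

/-- The `X`-distance of `UB(a, ℓ)` (with `t = 2^ℓ`):
`d_X = min { wt(u) + wt(v) : (u,v) ∈ ker H_X \ rs H_Z }`, where
`ker H_X = {(u,v) : a·u + b·v = 0}` and `rs H_Z = {(b*·s, a*·s)}`, `b = a^t`. -/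
def dXv (n : ℕ) (a : Polynomial (ZMod 2)) (t : ℕ) : ℕ :=
  sInf {m : ℕ | ∃ w : Rq n × Rq n,
    (mkq n a * w.1 + (mkq n a) ^ t * w.2 = 0) ∧
    (¬ ∃ s : Rq n, w = (mkq n ((a ^ t).reverse) * s, mkq n a.reverse * s)) ∧
    m = wtq n w.1 + wtq n w.2}

/-- Support of an element of `R_n`: indices of nonzero coefficients of its
unique representative of degree `< n`. -/
def suppq (n : ℕ) (g : Rq n) : Finset ℕ := (rep n g).support

/-- `ρ_6(g)`: the maximum, over triples `0 ≤ i₁ < i₂ < i₃ ≤ r-1`, of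
`|N₁₂|·|N₁₃|·|N₂₃|` where `N_{ab} = (supp(x^{i_a} g) ∩ supp(x^{i_b} g)) \ supp(x^{i_c} g)`
(the maximum induced 6-cycle density of the first `r` rows of `Circ(g)`). -/
def rho6 (n r : ℕ) (g : Rq n) : ℕ :=
  (((Finset.range r ×ˢ Finset.range r) ×ˢ Finset.range r).filter
      fun p => p.1.1 < p.1.2 ∧ p.1.2 < p.2).sup fun p =>
    ((suppq n (mkq n (X ^ p.1.1) * g) ∩ suppq n (mkq n (X ^ p.1.2) * g)) \
        suppq n (mkq n (X ^ p.2) * g)).card *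
    (((suppq n (mkq n (X ^ p.1.1) * g) ∩ suppq n (mkq n (X ^ p.2) * g)) \
        suppq n (mkq n (X ^ p.1.2) * g)).card *
      ((suppq n (mkq n (X ^ p.1.2) * g) ∩ suppq n (mkq n (X ^ p.2) * g)) \
        suppq n (mkq n (X ^ p.1.1) * g)).card)

lemma monic_m (n : ℕ) (hn : 1 ≤ n) : (X ^ n - 1 : Polynomial (ZMod 2)).Monic := by
  have := monic_X_pow_sub_C (1 : ZMod 2) (n := n) (by omega)
  rwa [C_1] at this

lemma degree_m (n : ℕ) (hn : 1 ≤ n) : (X ^ n - 1 : Polynomial (ZMod 2)).degree = n := by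
  have := degree_X_pow_sub_C (R := ZMod 2) (n := n) (by omega) 1
  rwa [C_1] at this

lemma mkq_eq_iff (n : ℕ) (p q : Polynomial (ZMod 2)) :
    mkq n p = mkq n q ↔ (X ^ n - 1 : Polynomial (ZMod 2)) ∣ p - q := by
  rw [Ideal.Quotient.eq, Ideal.mem_span_singleton]

lemma rep_eq (n : ℕ) (hn : 1 ≤ n) (z : Rq n) (q : Polynomial (ZMod 2))
    (hq : mkq n q = z) : rep n z = q %ₘ (X ^ n - 1) := by
  unfold rep
  set q' := Function.surjInv (Ideal.Quotient.mk_surjective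
    (I := Ideal.span ({X ^ n - 1} : Set (Polynomial (ZMod 2))))) z with hq'
  have h1 : mkq n q' = z := Function.surjInv_eq _ z
  obtain ⟨k, hk⟩ := (mkq_eq_iff n q' q).mp (h1.trans hq.symm)
  have hq2 : q' = q + (X ^ n - 1) * k := by linear_combination hk
  rw [hq2, add_modByMonic, (modByMonic_eq_zero_iff_dvd (monic_m n hn)).mpr (dvd_mul_right _ _), add_zero]

lemma mk_rep (n : ℕ) (hn : 1 ≤ n) (z : Rq n) : mkq n (rep n z) = z := by
  unfold rep
  set q' := Function.surjInv (Ideal.Quotient.mk_surjective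
    (I := Ideal.span ({X ^ n - 1} : Set (Polynomial (ZMod 2))))) z with hq'
  have h1 : mkq n q' = z := Function.surjInv_eq _ z
  rw [← h1, mkq_eq_iff]
  exact ⟨-(q' /ₘ (X ^ n - 1)), by
    have := modByMonic_eq_sub_mul_div q' (X ^ n - 1)
    linear_combination this⟩

lemma degree_rep_lt (n : ℕ) (hn : 1 ≤ n) (z : Rq n) : (rep n z).degree < n := by
  have := degree_modByMonic_lt (Function.surjInv (Ideal.Quotient.mk_surjective
    (I := Ideal.span ({X ^ n - 1} : Set (Polynomial (ZMod 2))))) z) (monic_m n hn)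
  rwa [degree_m n hn] at this

lemma modByMonic_rep (n : ℕ) (hn : 1 ≤ n) (z : Rq n) :
    rep n z %ₘ (X ^ n - 1) = rep n z := by
  rw [modByMonic_eq_self_iff (monic_m n hn), degree_m n hn]
  exact degree_rep_lt n hn z

lemma rep_add (n : ℕ) (hn : 1 ≤ n) (z w : Rq n) :
    rep n (z + w) = rep n z + rep n w := by
  have h : mkq n (rep n z + rep n w) = z + w := by
    rw [map_add, mk_rep n hn, mk_rep n hn]
  rw [rep_eq n hn _ _ h, add_modByMonic, modByMonic_rep n hn, modByMonic_rep n hn]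

lemma rep_mk (n : ℕ) (hn : 1 ≤ n) (p : Polynomial (ZMod 2)) (hp : p.degree < n) :
    rep n (mkq n p) = p := by
  rw [rep_eq n hn _ p rfl, modByMonic_eq_self_iff (monic_m n hn), degree_m n hn]
  exact hp

lemma wt_X_mul_le (n : ℕ) (hn : 1 ≤ n) (z : Rq n) :
    wtq n (mkq n X * z) ≤ wtq n z := by
  set p := rep n z with hp
  set c := p.coeff (n - 1) with hc
  set q : Polynomial (ZMod 2) := X * (p - C c * X ^ (n - 1)) + C c with hqdef
  have hdeg_p : p.degree < n := degree_rep_lt n hn z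
  have hpc : ∀ j, n ≤ j → p.coeff j = 0 := by
    intro j hj
    exact coeff_eq_zero_of_degree_lt (lt_of_lt_of_le hdeg_p (by exact_mod_cast hj))
  have hqc : ∀ j, q.coeff j = if j = 0 then c else (if j = n then 0 else p.coeff (j - 1)) := by
    intro j
    match j with
    | 0 => simp [hqdef, mul_coeff_zero]
    | Nat.succ j =>
      simp only [hqdef, coeff_add, coeff_X_mul, coeff_sub, coeff_C_mul, coeff_X_pow,
        coeff_C, Nat.succ_ne_zero, if_false, Nat.succ_sub_one]
      by_cases hj : j = n - 1
      · have h2 : j + 1 = n := by omega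
        simp [hj, h2, hc, show n - 1 + 1 = n by omega]
      · have h2 : ¬ (j + 1 = n) := by omega
        simp [hj, h2]
  have hqdeg : q.degree < n := by
    rw [degree_lt_iff_coeff_zero]
    intro m hm
    rw [hqc m]
    have hnm : n ≤ m := by exact_mod_cast hm
    have h0 : ¬ (m = 0) := by omega
    by_cases hmn : m = n
    · rw [if_neg h0, if_pos hmn]
    · have hx : n ≤ m - 1 := by omega
      simp [h0, hmn, hpc _ hx]
  have hrep : rep n (mkq n X * z) = q := by
    have hmk : mkq n q = mkq n X * z := by
      rw [← mk_rep n hn z, ← map_mul, mkq_eq_iff, ← hp]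
      refine ⟨-C c, ?_⟩
      have hX : (X : Polynomial (ZMod 2)) * X ^ (n - 1) = X ^ n := by
        rw [← pow_succ']; congr 1; omega
      rw [hqdef, ← hX]; ring
    rw [rep_eq n hn _ q hmk, modByMonic_eq_self_iff (monic_m n hn), degree_m n hn]
    exact hqdeg
  show (rep n (mkq n X * z)).support.card ≤ p.support.card
  rw [hrep]
  apply Finset.card_le_card_of_injOn (fun i => if i = 0 then n - 1 else i - 1)
  · intro i hi
    simp only [Finset.mem_coe, mem_support_iff] at hi ⊢
    rw [hqc i] at hi
    by_cases h0 : i = 0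
    · simpa [h0] using hi
    · by_cases hin : i = n
      · exfalso
        rw [if_neg h0, if_pos hin] at hi
        exact hi rfl
      · simpa [h0, hin] using hi
  · intro i hi i' hi' hmap
    simp only [Finset.mem_coe, mem_support_iff, hqc] at hi hi'
    by_cases h0 : i = 0 <;> by_cases h0' : i' = 0 <;>
      simp only [h0, h0', if_true, if_false] at hmap
    · omega
    · exfalso
      have hin' : i' = n := by
        have hto : i' ≤ n := by
          by_contra hcon
          push_neg at hcon
          rw [if_neg h0', if_neg (by omega : ¬ i' = n)] at hi'
          exact hi' (hpc _ (by omega))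
        omega
      rw [if_neg h0', if_pos hin'] at hi'
      exact hi' rfl
    · exfalso
      have hin : i = n := by
        have hto : i ≤ n := by
          by_contra hcon
          push_neg at hcon
          rw [if_neg h0, if_neg (by omega : ¬ i = n)] at hi
          exact hi (hpc _ (by omega))
        omega
      rw [if_neg h0, if_pos hin] at hi
      exact hi rfl
    · omega

lemma wt_X_pow_mul_le (n : ℕ) (hn : 1 ≤ n) (i : ℕ) (z : Rq n) :
    wtq n (mkq n (X ^ i) * z) ≤ wtq n z := by
  induction i with
  | zero => simp
  | succ i ih =>
    have he : mkq n (X ^ (i + 1)) * z = mkq n X * (mkq n (X ^ i) * z) := by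
      rw [pow_succ, map_mul]; ring
    rw [he]
    exact le_trans (wt_X_mul_le n hn _) ih

lemma card_add3 (p1 p2 p3 : Polynomial (ZMod 2)) :
    (p1 + p2 + p3).support.card
      + 2 * (((p1.support ∩ p2.support) \ p3.support).card
        + (((p1.support ∩ p3.support) \ p2.support).card
        + ((p2.support ∩ p3.support) \ p1.support).card))
      ≤ p1.support.card + p2.support.card + p3.support.card := by
  classical
  set U := p1.support ∪ p2.support ∪ p3.support with hU
  have key : ∀ T : Finset ℕ, T ⊆ U → T.card = ∑ j ∈ U, (if j ∈ T then 1 else 0) := by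
    intro T hT
    rw [← Finset.card_filter]
    congr 1
    rw [Finset.filter_mem_eq_inter, Finset.inter_eq_right.mpr hT]
  have hs1 : p1.support ⊆ U := Finset.subset_union_left.trans Finset.subset_union_left
  have hs2 : p2.support ⊆ U := Finset.subset_union_right.trans Finset.subset_union_left
  have hs3 : p3.support ⊆ U := Finset.subset_union_right
  have hs0 : (p1 + p2 + p3).support ⊆ U := by
    intro j hj
    simp only [mem_support_iff, coeff_add] at hj
    simp only [hU, Finset.mem_union, mem_support_iff]
    by_contra hc
    push_neg at hc
    rw [hc.1.1, hc.1.2, hc.2] at hj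
    simp at hj
  have hn12 : (p1.support ∩ p2.support) \ p3.support ⊆ U :=
    fun j hj => hs1 (Finset.mem_of_mem_inter_left (Finset.mem_sdiff.mp hj).1)
  have hn13 : (p1.support ∩ p3.support) \ p2.support ⊆ U :=
    fun j hj => hs1 (Finset.mem_of_mem_inter_left (Finset.mem_sdiff.mp hj).1)
  have hn23 : (p2.support ∩ p3.support) \ p1.support ⊆ U :=
    fun j hj => hs2 (Finset.mem_of_mem_inter_left (Finset.mem_sdiff.mp hj).1)
  rw [key _ hs0, key _ hs1, key _ hs2, key _ hs3, key _ hn12, key _ hn13, key _ hn23,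
    ← Finset.sum_add_distrib, ← Finset.sum_add_distrib, Finset.mul_sum,
    ← Finset.sum_add_distrib, ← Finset.sum_add_distrib, ← Finset.sum_add_distrib]
  apply Finset.sum_le_sum
  intro j hj
  have hone : ∀ c : ZMod 2, ¬ c = 0 → c = 1 := by decide
  by_cases h1 : p1.coeff j = 0 <;> by_cases h2 : p2.coeff j = 0 <;> by_cases h3 : p3.coeff j = 0 <;>
    simp only [Finset.mem_sdiff, Finset.mem_inter, mem_support_iff, coeff_add,
      h1, h2, h3] <;>
    simp_all [hone _ ‹¬ _ = 0›] <;> decide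


lemma amgm (x y z : ℝ) (hx : 0 ≤ x) (hy : 0 ≤ y) (hz : 0 ≤ z) :
    6 * (x * y * z) ^ ((1:ℝ)/3) ≤ 2 * (x + y + z) := by
  have hmul : (x * y * z) ^ ((1:ℝ)/3) = x ^ ((1:ℝ)/3) * y ^ ((1:ℝ)/3) * z ^ ((1:ℝ)/3) := by
    rw [Real.mul_rpow (by positivity) hz, Real.mul_rpow hx hy]
  have := Real.geom_mean_le_arith_mean3_weighted (by norm_num : (0:ℝ) ≤ 1/3)
    (by norm_num : (0:ℝ) ≤ 1/3) (by norm_num : (0:ℝ) ≤ 1/3) hx hy hz (by norm_num)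
  rw [hmul]
  nlinarith [this]

lemma reverse_pow (a : Polynomial (ZMod 2)) (t : ℕ) : (a ^ t).reverse = a.reverse ^ t := by
  induction t with
  | zero => rw [pow_zero, pow_zero, ← C_1, reverse_C]
  | succ t ih => rw [pow_succ, reverse_mul_of_domain, ih, pow_succ]

lemma add_self_rq (n : ℕ) (y : Rq n) : y + y = 0 := by
  have h2 : (1 + 1 : Rq n) = 0 := by
    have h1 : ((1:Rq n) + 1) = mkq n (1 + 1) := by simp
    have h0 : (1 + 1 : Polynomial (ZMod 2)) = 0 := by
      rw [← C_1, ← C_add]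
      norm_num
      decide
    rw [h1, h0, map_zero]
  have : y + y = (1 + 1) * y := by ring
  rw [this, h2, zero_mul]


lemma wtq_zero (n : ℕ) (hn : 1 ≤ n) : wtq n (0 : Rq n) = 0 := by
  unfold wtq
  rw [rep_eq n hn 0 0 (map_zero _), zero_modByMonic, support_zero, Finset.card_empty]

lemma key_bound (n : ℕ) (hn : 1 ≤ n) (r : ℕ) (hr3 : 3 ≤ r) (g : Rq n) :
    ∃ i₁ i₂ i₃ : ℕ, i₁ < i₂ ∧ i₂ < i₃ ∧ i₃ < r ∧
      (wtq n (mkq n (X ^ i₁ + X ^ i₂ + X ^ i₃) * g) : ℝ) ≤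
        3 * wtq n g - 6 * (rho6 n r g : ℝ) ^ ((1:ℝ)/3) := by
  classical
  set F := (((Finset.range r ×ˢ Finset.range r) ×ˢ Finset.range r).filter
      fun p : (ℕ × ℕ) × ℕ => p.1.1 < p.1.2 ∧ p.1.2 < p.2) with hF
  have hne : F.Nonempty := by
    refine ⟨((0, 1), 2), ?_⟩
    simp only [hF, Finset.mem_filter, Finset.mem_product, Finset.mem_range]
    omega
  obtain ⟨p, hpF, hpeq⟩ := Finset.exists_mem_eq_sup F hne
    (fun p : (ℕ × ℕ) × ℕ =>
      ((suppq n (mkq n (X ^ p.1.1) * g) ∩ suppq n (mkq n (X ^ p.1.2) * g)) \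
          suppq n (mkq n (X ^ p.2) * g)).card *
      (((suppq n (mkq n (X ^ p.1.1) * g) ∩ suppq n (mkq n (X ^ p.2) * g)) \
          suppq n (mkq n (X ^ p.1.2) * g)).card *
        ((suppq n (mkq n (X ^ p.1.2) * g) ∩ suppq n (mkq n (X ^ p.2) * g)) \
          suppq n (mkq n (X ^ p.1.1) * g)).card))
  simp only [hF, Finset.mem_filter, Finset.mem_product, Finset.mem_range] at hpF
  obtain ⟨⟨⟨h1r, h2r⟩, h3r⟩, h12, h23⟩ := hpF
  refine ⟨p.1.1, p.1.2, p.2, h12, h23, h3r, ?_⟩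
  have hrho : rho6 n r g =
      ((suppq n (mkq n (X ^ p.1.1) * g) ∩ suppq n (mkq n (X ^ p.1.2) * g)) \
          suppq n (mkq n (X ^ p.2) * g)).card *
      (((suppq n (mkq n (X ^ p.1.1) * g) ∩ suppq n (mkq n (X ^ p.2) * g)) \
          suppq n (mkq n (X ^ p.1.2) * g)).card *
        ((suppq n (mkq n (X ^ p.1.2) * g) ∩ suppq n (mkq n (X ^ p.2) * g)) \
          suppq n (mkq n (X ^ p.1.1) * g)).card) := hpeq
  set u₁ := mkq n (X ^ p.1.1) * g
  set u₂ := mkq n (X ^ p.1.2) * g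
  set u₃ := mkq n (X ^ p.2) * g
  have hsum : mkq n (X ^ p.1.1 + X ^ p.1.2 + X ^ p.2) * g = u₁ + u₂ + u₃ := by
    rw [map_add, map_add]; ring
  have hrepsum : rep n (u₁ + u₂ + u₃) = rep n u₁ + rep n u₂ + rep n u₃ := by
    rw [rep_add n hn, rep_add n hn]
  have hcard := card_add3 (rep n u₁) (rep n u₂) (rep n u₃)
  have hw1 : (rep n u₁).support.card ≤ wtq n g := wt_X_pow_mul_le n hn _ g
  have hw2 : (rep n u₂).support.card ≤ wtq n g := wt_X_pow_mul_le n hn _ g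
  have hw3 : (rep n u₃).support.card ≤ wtq n g := wt_X_pow_mul_le n hn _ g
  have hWnat : wtq n (mkq n (X ^ p.1.1 + X ^ p.1.2 + X ^ p.2) * g)
      + 2 * (((suppq n u₁ ∩ suppq n u₂) \ suppq n u₃).card
        + (((suppq n u₁ ∩ suppq n u₃) \ suppq n u₂).card
          + ((suppq n u₂ ∩ suppq n u₃) \ suppq n u₁).card))
      ≤ 3 * wtq n g := by
    have : wtq n (mkq n (X ^ p.1.1 + X ^ p.1.2 + X ^ p.2) * g)
        = (rep n u₁ + rep n u₂ + rep n u₃).support.card := by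
      rw [wtq, hsum, hrepsum]
    rw [this]
    unfold suppq
    omega
  set n12 := ((suppq n u₁ ∩ suppq n u₂) \ suppq n u₃).card
  set n13 := ((suppq n u₁ ∩ suppq n u₃) \ suppq n u₂).card
  set n23 := ((suppq n u₂ ∩ suppq n u₃) \ suppq n u₁).card
  have hamgm : 6 * ((rho6 n r g : ℝ)) ^ ((1:ℝ)/3) ≤ 2 * ((n12 : ℝ) + n13 + n23) := by
    rw [hrho]
    push_cast
    have := amgm (n12 : ℝ) (n13 : ℝ) (n23 : ℝ) (by positivity) (by positivity) (by positivity)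
    calc 6 * ((n12 : ℝ) * ((n13 : ℝ) * (n23 : ℝ))) ^ ((1:ℝ)/3)
        = 6 * ((n12 : ℝ) * (n13 : ℝ) * (n23 : ℝ)) ^ ((1:ℝ)/3) := by ring_nf
      _ ≤ 2 * ((n12 : ℝ) + n13 + n23) := this
  have hWreal : (wtq n (mkq n (X ^ p.1.1 + X ^ p.1.2 + X ^ p.2) * g) : ℝ)
      + 2 * ((n12 : ℝ) + ((n13 : ℝ) + n23)) ≤ 3 * wtq n g := by
    exact_mod_cast hWnat
  linarith

/-- weight-3 distance bound from induced 6-cycle densities: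
`d ≤ min{3 wt(f) + 3 - 6 ρ_6(f)^{1/3}, 3 wt(h) - 6 ρ_6(h)^{1/3}}`. -/
theorem stmt14 (n : ℕ) (hn : 1 ≤ n) (a h : Polynomial (ZMod 2))
    (hah : a * h = X ^ n - 1) (r : ℕ) (hr : r = a.natDegree) (hr3 : 3 ≤ r)
    (ℓ t : ℕ) (hℓ : 1 ≤ ℓ) (ht : t = 2 ^ ℓ)
    (f : Rq n) (hf : f = (mkq n a) ^ (t - 1)) :
    (min (dXv n a t) (dZv n a t) : ℝ) ≤
      min (3 * wtq n f + 3 - 6 * (rho6 n r f : ℝ) ^ ((1 : ℝ) / 3))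
        (3 * wtq n (mkq n h) - 6 * (rho6 n r (mkq n h) : ℝ) ^ ((1 : ℝ) / 3)) := by
  have ht2 : 2 ≤ t := by
    subst ht
    calc 2 = 2 ^ 1 := (pow_one 2).symm
      _ ≤ 2 ^ ℓ := Nat.pow_le_pow_right (by norm_num) hℓ
  have hmne : (X ^ n - 1 : Polynomial (ZMod 2)) ≠ 0 := (monic_m n hn).ne_zero
  have ha0 : a ≠ 0 := fun hc => hmne (by rw [← hah, hc, zero_mul])
  have hh0 : h ≠ 0 := fun hc => hmne (by rw [← hah, hc, mul_zero])
  have hndeg : (X ^ n - 1 : Polynomial (ZMod 2)).natDegree = n := by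
    have := natDegree_X_pow_sub_C (R := ZMod 2) (n := n) (r := 1)
    rwa [C_1] at this
  have hdegsum : a.natDegree + h.natDegree = n := by
    rw [← natDegree_mul ha0 hh0, hah, hndeg]
  have hrn : r ≤ n := by omega
  have hhdeg : h.natDegree = n - r := by omega
  have hdvd0 : ∀ p : Polynomial (ZMod 2),
      mkq n p = 0 ↔ (X ^ n - 1 : Polynomial (ZMod 2)) ∣ p := by
    intro p
    rw [Ideal.Quotient.eq_zero_iff_mem, Ideal.mem_span_singleton]
  have hmk_m : mkq n (X ^ n - 1 : Polynomial (ZMod 2)) = 0 := (hdvd0 _).mpr dvd_rfl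
  have haux : (X ^ n - 1 : Polynomial (ZMod 2)) = X ^ n + 1 := by
    have hneg : (-1 : Polynomial (ZMod 2)) = 1 := by
      rw [← C_1, ← C_neg]
      congr 1
    rw [sub_eq_add_neg, hneg]
  have hrev_m : (X ^ n - 1 : Polynomial (ZMod 2)).reverse = X ^ n - 1 := by
    conv_lhs => rw [haux]
    rw [reverse, show (X ^ n + 1 : Polynomial (ZMod 2)).natDegree = n from by
        rw [← haux, hndeg],
      reflect_add, reflect_monomial, reflect_one, revAt_le (le_refl n), Nat.sub_self,
      pow_zero, haux]
    ring
  -- generic facts about e = X^i₁ + X^i₂ + X^i₃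
  have he_ne : ∀ i₁ i₂ i₃ : ℕ, i₁ < i₂ → i₂ < i₃ →
      (X ^ i₁ + X ^ i₂ + X ^ i₃ : Polynomial (ZMod 2)) ≠ 0 := by
    intro i₁ i₂ i₃ h12 h23 hc
    have hco := congrArg (fun p : Polynomial (ZMod 2) => p.coeff i₃) hc
    simp only [coeff_add, coeff_X_pow, coeff_zero, if_pos rfl] at hco
    rw [if_neg (by omega : ¬ i₃ = i₁), if_neg (by omega : ¬ i₃ = i₂)] at hco
    simp at hco
  have he_deg : ∀ i₁ i₂ i₃ : ℕ, i₁ < i₂ → i₂ < i₃ →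
      (X ^ i₁ + X ^ i₂ + X ^ i₃ : Polynomial (ZMod 2)).natDegree ≤ i₃ := by
    intro i₁ i₂ i₃ h12 h23
    refine (natDegree_add_le _ _).trans (max_le ?_ ?_)
    · refine (natDegree_add_le _ _).trans (max_le ?_ ?_) <;>
        rw [natDegree_X_pow] <;> omega
    · rw [natDegree_X_pow]
  have hwte : ∀ i₁ i₂ i₃ : ℕ, i₁ < i₂ → i₂ < i₃ → i₃ < r →
      wtq n (mkq n (X ^ i₁ + X ^ i₂ + X ^ i₃ : Polynomial (ZMod 2))) ≤ 3 := by
    intro i₁ i₂ i₃ h12 h23 h3r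
    have hdlt : (X ^ i₁ + X ^ i₂ + X ^ i₃ : Polynomial (ZMod 2)).degree < (n : WithBot ℕ) := by
      refine lt_of_le_of_lt (degree_le_natDegree) ?_
      have := he_deg i₁ i₂ i₃ h12 h23
      exact_mod_cast (by omega : (X ^ i₁ + X ^ i₂ + X ^ i₃ : Polynomial (ZMod 2)).natDegree < n)
    unfold wtq
    rw [rep_mk n hn _ hdlt]
    have hsub : (X ^ i₁ + X ^ i₂ + X ^ i₃ : Polynomial (ZMod 2)).support ⊆ {i₁, i₂, i₃} := by
      refine support_add.trans ?_
      intro j hj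
      rcases Finset.mem_union.mp hj with hj | hj
      · rcases Finset.mem_union.mp (support_add hj) with hj | hj <;>
          · rw [support_X_pow] at hj
            simp only [Finset.mem_singleton] at hj
            simp [hj]
      · rw [support_X_pow] at hj
        simp only [Finset.mem_singleton] at hj
        simp [hj]
    refine (Finset.card_le_card hsub).trans ?_
    refine (Finset.card_insert_le _ _).trans ?_
    have := Finset.card_insert_le i₂ ({i₃} : Finset ℕ)
    simp only [Finset.card_singleton] at this ⊢
    omega
  -- the two codeword bounds
  obtain ⟨i₁, i₂, i₃, h12, h23, h3r, hbf⟩ := key_bound n hn r hr3 f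
  obtain ⟨j₁, j₂, j₃, g12, g23, g3r, hbh⟩ := key_bound n hn r hr3 (mkq n h)
  -- Case A : f-side codeword
  have hkerA : mkq n a * (mkq n (X ^ i₁ + X ^ i₂ + X ^ i₃) * f)
      + (mkq n a) ^ t * mkq n (X ^ i₁ + X ^ i₂ + X ^ i₃) = 0 := by
    rw [hf]
    have hpow : (mkq n a) ^ t = (mkq n a) ^ (t - 1) * mkq n a := by
      rw [← pow_succ]
      congr 1
      omega
    rw [hpow]
    have heq : mkq n a * (mkq n (X ^ i₁ + X ^ i₂ + X ^ i₃) * (mkq n a) ^ (t - 1))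
        + (mkq n a) ^ (t - 1) * mkq n a * mkq n (X ^ i₁ + X ^ i₂ + X ^ i₃)
        = mkq n (X ^ i₁ + X ^ i₂ + X ^ i₃) * ((mkq n a) ^ (t - 1) * mkq n a)
          + mkq n (X ^ i₁ + X ^ i₂ + X ^ i₃) * ((mkq n a) ^ (t - 1) * mkq n a) := by
      ring
    rw [heq, add_self_rq]
  have hnotA : ¬ ∃ s : Rq n, ((mkq n (X ^ i₁ + X ^ i₂ + X ^ i₃) * f,
        mkq n (X ^ i₁ + X ^ i₂ + X ^ i₃)) : Rq n × Rq n)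
      = (mkq n ((a ^ t).reverse) * s, mkq n a.reverse * s) := by
    rintro ⟨s, hs⟩
    rw [Prod.mk.injEq] at hs
    obtain ⟨-, hs2⟩ := hs
    have hz : mkq n (h.reverse * (X ^ i₁ + X ^ i₂ + X ^ i₃)) = 0 := by
      rw [map_mul, hs2, ← mul_assoc, ← map_mul, ← reverse_mul_of_domain, mul_comm h a, hah,
        hrev_m, hmk_m, zero_mul]
    rw [hdvd0] at hz
    have hprodne : h.reverse * (X ^ i₁ + X ^ i₂ + X ^ i₃) ≠ 0 :=
      mul_ne_zero (by rwa [Ne, reverse_eq_zero]) (he_ne i₁ i₂ i₃ h12 h23)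
    have hd1 := natDegree_le_of_dvd hz hprodne
    rw [hndeg] at hd1
    have hd2 : (h.reverse * (X ^ i₁ + X ^ i₂ + X ^ i₃)).natDegree ≤ (n - r) + i₃ :=
      natDegree_mul_le.trans
        (add_le_add (h.reverse_natDegree_le.trans hhdeg.le) (he_deg i₁ i₂ i₃ h12 h23))
    omega
  have hA : dXv n a t ≤ wtq n (mkq n (X ^ i₁ + X ^ i₂ + X ^ i₃) * f)
      + wtq n (mkq n (X ^ i₁ + X ^ i₂ + X ^ i₃)) := by
    apply Nat.sInf_le
    exact ⟨(mkq n (X ^ i₁ + X ^ i₂ + X ^ i₃) * f, mkq n (X ^ i₁ + X ^ i₂ + X ^ i₃)),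
      hkerA, hnotA, rfl⟩
  -- Case B : h-side codeword
  have hkerB : mkq n a * (mkq n (X ^ j₁ + X ^ j₂ + X ^ j₃) * mkq n h)
      + (mkq n a) ^ t * (0 : Rq n) = 0 := by
    rw [mul_zero, add_zero, ← map_mul, ← map_mul,
      show a * ((X ^ j₁ + X ^ j₂ + X ^ j₃) * h) = (X ^ j₁ + X ^ j₂ + X ^ j₃) * (a * h) from by
        ring,
      hah, map_mul, hmk_m, mul_zero]
  have hnotB : ¬ ∃ s : Rq n, ((mkq n (X ^ j₁ + X ^ j₂ + X ^ j₃) * mkq n h, (0 : Rq n)) : Rq n × Rq n)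
      = (mkq n ((a ^ t).reverse) * s, mkq n a.reverse * s) := by
    rintro ⟨s, hs⟩
    rw [Prod.mk.injEq] at hs
    obtain ⟨hs1, hs2⟩ := hs
    have hz : mkq n ((X ^ j₁ + X ^ j₂ + X ^ j₃) * h) = 0 := by
      rw [map_mul, hs1, reverse_pow, map_pow,
        show t = (t - 1) + 1 from by omega, pow_succ, mul_assoc, ← hs2, mul_zero]
    rw [hdvd0] at hz
    have hprodne : (X ^ j₁ + X ^ j₂ + X ^ j₃) * h ≠ 0 :=
      mul_ne_zero (he_ne j₁ j₂ j₃ g12 g23) hh0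
    have hd1 := natDegree_le_of_dvd hz hprodne
    rw [hndeg] at hd1
    have hd2 : ((X ^ j₁ + X ^ j₂ + X ^ j₃) * h).natDegree ≤ j₃ + (n - r) :=
      natDegree_mul_le.trans (add_le_add (he_deg j₁ j₂ j₃ g12 g23) hhdeg.le)
    omega
  have hB : dXv n a t ≤ wtq n (mkq n (X ^ j₁ + X ^ j₂ + X ^ j₃) * mkq n h)
      + wtq n (0 : Rq n) := by
    apply Nat.sInf_le
    exact ⟨(mkq n (X ^ j₁ + X ^ j₂ + X ^ j₃) * mkq n h, (0 : Rq n)), hkerB, hnotB, rfl⟩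
  rw [wtq_zero n hn, add_zero] at hB
  -- assemble
  have hminA : min (dXv n a t) (dZv n a t) ≤ wtq n (mkq n (X ^ i₁ + X ^ i₂ + X ^ i₃) * f)
      + wtq n (mkq n (X ^ i₁ + X ^ i₂ + X ^ i₃)) := le_trans (min_le_left _ _) hA
  have hminB : min (dXv n a t) (dZv n a t) ≤
      wtq n (mkq n (X ^ j₁ + X ^ j₂ + X ^ j₃) * mkq n h) := le_trans (min_le_left _ _) hB
  rw [le_min_iff]
  constructor
  · have hminAR : (min (dXv n a t) (dZv n a t) : ℝ)
        ≤ (wtq n (mkq n (X ^ i₁ + X ^ i₂ + X ^ i₃) * f) : ℝ)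
          + (wtq n (mkq n (X ^ i₁ + X ^ i₂ + X ^ i₃)) : ℝ) := by
      exact_mod_cast hminA
    have hwteR : (wtq n (mkq n (X ^ i₁ + X ^ i₂ + X ^ i₃)) : ℝ) ≤ 3 := by
      exact_mod_cast hwte i₁ i₂ i₃ h12 h23 (by omega)
    linarith
  · have hminBR : (min (dXv n a t) (dZv n a t) : ℝ)
        ≤ (wtq n (mkq n (X ^ j₁ + X ^ j₂ + X ^ j₃) * mkq n h) : ℝ) := by
      exact_mod_cast hminB
    linarith


end
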